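/- Let A be an n×n positive semidefinite Hermitian matrix of rank one, and let B be an n×n Hermitian matrix such that both A+B and A−B are positive semidefinite. Then B is a scalar multiple of A. -/

import Mathlib

open scoped ComplexOrder
open Matrix

private lemma vecMulVec_mulVec_aux {n : ℕ} (v w x : Fin n → ℂ) :
    (Matrix.vecMulVec v w) *ᵥ x = (w ⬝ᵥ x) • v := by
  funext i
  simp only [Matrix.mulVec, Matrix.vecMulVec_apply, dotProduct, Pi.smul_apply,
    smul_eq_mul, Finset.sum_mul, Finset.mul_sum]
  exact Finset.sum_congr rfl fun m _ => by ring

private lemma rank_one_decomp_aux {n : ℕ} (A : Matrix (Fin n) (Fin n) ℂ)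
    (hA : A.PosSemidef) (hrank : A.rank = 1) :
    ∃ v : Fin n → ℂ, v ≠ 0 ∧ A = Matrix.vecMulVec v (star v) := by
  have hH := hA.1
  have hcard : Fintype.card {i // hH.eigenvalues i ≠ 0} = 1 := by
    rw [← hH.rank_eq_card_non_zero_eigs, hrank]
  obtain ⟨⟨j, hj⟩, hjuniq⟩ := Fintype.card_eq_one_iff.mp hcard
  have hzero : ∀ m : Fin n, m ≠ j → hH.eigenvalues m = 0 := by
    intro m hm
    by_contra hm0
    exact hm (congrArg Subtype.val (hjuniq ⟨m, hm0⟩))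
  have hjnn : 0 ≤ hH.eigenvalues j := hA.eigenvalues_nonneg j
  set U : Matrix (Fin n) (Fin n) ℂ := (hH.eigenvectorUnitary : Matrix (Fin n) (Fin n) ℂ) with hU
  set v : Fin n → ℂ := fun i => (Real.sqrt (hH.eigenvalues j) : ℂ) * U i j with hv
  have hAv : A = Matrix.vecMulVec v (star v) := by
    ext i k
    have hspec := hH.spectral_theorem
    have h1 : A i k = ∑ m, U i m * ((hH.eigenvalues m : ℝ) : ℂ) * (star U) m k := by
      conv_lhs => rw [hspec, Unitary.conjStarAlgAut_apply]
      rw [Matrix.mul_apply]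
      refine Finset.sum_congr rfl fun m _ => ?_
      rw [Matrix.mul_diagonal]
      simp [Matrix.star_apply, hU, Function.comp]
    rw [h1, Finset.sum_eq_single j]
    · simp only [Matrix.vecMulVec_apply, hv, Pi.star_apply, star_mul',
        RCLike.star_def, Complex.conj_ofReal, Matrix.star_apply]
      rw [show ((Real.sqrt (hH.eigenvalues j) : ℂ) * U i j) *
          ((Real.sqrt (hH.eigenvalues j) : ℂ) * (starRingEnd ℂ) (U k j))
          = ((Real.sqrt (hH.eigenvalues j) : ℂ) * (Real.sqrt (hH.eigenvalues j) : ℂ))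
            * (U i j * (starRingEnd ℂ) (U k j)) by ring]
      rw [← Complex.ofReal_mul, Real.mul_self_sqrt hjnn]
      ring
    · intro m _ hm
      rw [hzero m hm]
      simp
    · intro h
      exact absurd (Finset.mem_univ j) h
  refine ⟨v, ?_, hAv⟩
  intro hv0
  rw [hv0] at hAv
  have hA0 : A = 0 := by
    rw [hAv]
    ext i k
    simp [Matrix.vecMulVec_apply]
  rw [hA0] at hrank
  simp [Matrix.rank_zero] at hrank

/-- If `A` is a positive semidefinite Hermitian matrix of rank one and `B` is Hermitian
with `A + B` and `A - B` both positive semidefinite, then `B` is a real scalar multiple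
of `A`. -/
theorem rank_one_sandwich_linear_dependent {n : ℕ}
    (A B : Matrix (Fin n) (Fin n) ℂ)
    (hA : A.PosSemidef) (hrank : A.rank = 1)
    (hB : B.IsHermitian)
    (hAB : (A + B).PosSemidef) (hAB' : (A - B).PosSemidef) :
    ∃ c : ℝ, B = (c : ℂ) • A := by
  obtain ⟨v, hv0, hAv⟩ := rank_one_decomp_aux A hA hrank
  set α : ℂ := star v ⬝ᵥ v with hα
  have hαne : α ≠ 0 := fun h => hv0 (dotProduct_star_self_eq_zero.mp h)
  -- key: x ⟂ v implies B x = 0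
  have key : ∀ x : Fin n → ℂ, star v ⬝ᵥ x = 0 → B *ᵥ x = 0 := by
    intro x hx
    have hAx : A *ᵥ x = 0 := by
      rw [hAv, vecMulVec_mulVec_aux, hx, zero_smul]
    have h1 : 0 ≤ star x ⬝ᵥ B *ᵥ x := by
      have h := hAB.dotProduct_mulVec_nonneg x
      rwa [Matrix.add_mulVec, dotProduct_add, hAx, dotProduct_zero, zero_add] at h
    have h2 : star x ⬝ᵥ B *ᵥ x ≤ 0 := by
      have h := hAB'.dotProduct_mulVec_nonneg x
      rw [Matrix.sub_mulVec, dotProduct_sub, hAx, dotProduct_zero, zero_sub] at h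
      exact neg_nonneg.mp h
    have h3 : star x ⬝ᵥ B *ᵥ x = 0 := le_antisymm h2 h1
    have h4 : star x ⬝ᵥ (A + B) *ᵥ x = 0 := by
      rw [Matrix.add_mulVec, dotProduct_add, hAx, dotProduct_zero, zero_add, h3]
    have h5 : (A + B) *ᵥ x = 0 := (hAB.dotProduct_mulVec_zero_iff x).mp h4
    have h6 : A *ᵥ x + B *ᵥ x = 0 := by rwa [Matrix.add_mulVec] at h5
    rw [hAx, zero_add] at h6
    exact h6
  set μ : ℂ := star v ⬝ᵥ B *ᵥ v with hμ
  set z : ℂ := μ / (α * α) with hz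
  -- B v = z • v
  have hBv : B *ᵥ v = (z * α) • v := by
    set w : Fin n → ℂ := B *ᵥ v - (z * α) • v with hw
    have hvw : star v ⬝ᵥ w = 0 := by
      rw [hw, dotProduct_sub, dotProduct_smul, ← hμ, ← hα, smul_eq_mul, hz]
      field_simp
      ring
    have hBw : B *ᵥ w = 0 := key w hvw
    have hwv : star w ⬝ᵥ v = 0 := by
      rw [Matrix.star_dotProduct, hvw, star_zero]
    have hwBv : star w ⬝ᵥ B *ᵥ v = 0 := by
      rw [Matrix.dotProduct_mulVec]
      have : star w ᵥ* B = 0 := by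
        have h := congrArg star hBw
        rw [Matrix.star_mulVec, hB.eq, star_zero] at h
        exact h
      rw [this, zero_dotProduct]
    have hww : star w ⬝ᵥ w = 0 := by
      rw [hw]
      conv_lhs => rw [dotProduct_sub]
      rw [hwBv, dotProduct_smul, hwv, smul_zero, sub_zero]
    have : w = 0 := dotProduct_star_self_eq_zero.mp hww
    rw [hw, sub_eq_zero] at this
    exact this
  -- B = z • A
  have hBA : B = z • A := by
    ext i k
    have hk : star v ⬝ᵥ (Pi.single k 1 : Fin n → ℂ) = star (v k) := by
      rw [dotProduct_single, mul_one, Pi.star_apply]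
    set y : Fin n → ℂ := Pi.single k 1 - (star (v k) / α) • v with hy
    have hvy : star v ⬝ᵥ y = 0 := by
      rw [hy, dotProduct_sub, hk, dotProduct_smul, ← hα, smul_eq_mul]
      field_simp
      ring
    have hBy : B *ᵥ y = 0 := key y hvy
    have hBx : B *ᵥ (Pi.single k 1 : Fin n → ℂ) = ((star (v k) / α) * (z * α)) • v := by
      have h : (Pi.single k 1 : Fin n → ℂ) = y + (star (v k) / α) • v := by
        rw [hy]; abel
      rw [h, Matrix.mulVec_add, hBy, zero_add, Matrix.mulVec_smul, hBv, smul_smul]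
    have hBik : B i k = (star (v k) / α) * (z * α) * v i := by
      have h7 := congrFun hBx i
      simp only [Matrix.mulVec_single_one, Matrix.col_apply, mul_one, Pi.smul_apply, smul_eq_mul] at h7
      exact h7
    have hAik : A i k = v i * star (v k) := by
      rw [hAv, Matrix.vecMulVec_apply, Pi.star_apply]
    rw [Matrix.smul_apply, hBik, hAik, smul_eq_mul]
    field_simp
  -- z is real
  have hzr : star z = z := by
    have h := hB.eq
    rw [hBA, Matrix.conjTranspose_smul, hA.1.eq] at h
    obtain ⟨i, k, hik⟩ : ∃ i k, A i k ≠ 0 := by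
      by_contra hc
      push_neg at hc
      have : A = 0 := by ext i k; exact hc i k
      rw [this] at hrank
      simp [Matrix.rank_zero] at hrank
    have := congrFun (congrFun h i) k
    rw [Matrix.smul_apply, Matrix.smul_apply, smul_eq_mul, smul_eq_mul] at this
    exact mul_right_cancel₀ hik this
  refine ⟨z.re, ?_⟩
  rw [hBA]
  congr 1
  exact (Complex.conj_eq_iff_re.mp hzr).symm
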